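/- arXiv:1504.06942 — 2 statements merged into one kernel-verified Lean document; each statement's English description precedes it below -/
import Mathlib

section
/- For any f : {1,...,9} → {0,1} satisfying f(i)f(j) = 0 for every edge {i,j} of the KK exclusivity graph, Σᵢ f(i) ≤ 3. -/
/-- Edges of the Kurzyński–Kaszlikowski exclusivity graph on vertices {1,…,9}. -/
def KKedges : List (ℕ × ℕ) :=
  [(1,2),(1,3),(1,4),(2,3),(2,5),(3,6),(4,7),(4,8),(5,7),(5,9),(6,8),(6,9),(7,8)]

/-- KK noncontextual bound: any 0/1 assignment to the nine events with
`f i * f j = 0` on every edge of the KK exclusivity graph sums to at most 3. -/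
theorem kk_classical_bound (f : Fin 9 → ℕ)
    (h01 : ∀ i, f i = 0 ∨ f i = 1)
    (hexcl : ∀ i j : Fin 9, (i.val + 1, j.val + 1) ∈ KKedges → f i * f j = 0) :
    ∑ i, f i ≤ 3 := by
  have e12 := hexcl 0 1 (by decide)
  have e13 := hexcl 0 2 (by decide)
  have e14 := hexcl 0 3 (by decide)
  have e23 := hexcl 1 2 (by decide)
  have e25 := hexcl 1 4 (by decide)
  have e36 := hexcl 2 5 (by decide)
  have e47 := hexcl 3 6 (by decide)
  have e48 := hexcl 3 7 (by decide)
  have e57 := hexcl 4 6 (by decide)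
  have e59 := hexcl 4 8 (by decide)
  have e68 := hexcl 5 7 (by decide)
  have e69 := hexcl 5 8 (by decide)
  have e78 := hexcl 6 7 (by decide)
  have s12 := Nat.mul_eq_zero.mp e12
  have s13 := Nat.mul_eq_zero.mp e13
  have s14 := Nat.mul_eq_zero.mp e14
  have s23 := Nat.mul_eq_zero.mp e23
  have s25 := Nat.mul_eq_zero.mp e25
  have s36 := Nat.mul_eq_zero.mp e36
  have s47 := Nat.mul_eq_zero.mp e47
  have s48 := Nat.mul_eq_zero.mp e48
  have s57 := Nat.mul_eq_zero.mp e57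
  have s59 := Nat.mul_eq_zero.mp e59
  have s68 := Nat.mul_eq_zero.mp e68
  have s69 := Nat.mul_eq_zero.mp e69
  have s78 := Nat.mul_eq_zero.mp e78
  have h0 := h01 0; have h1 := h01 1; have h2 := h01 2; have h3 := h01 3
  have h4 := h01 4; have h5 := h01 5; have h6 := h01 6; have h7 := h01 7
  have h8 := h01 8
  have hsum : ∑ i, f i = f 0 + f 1 + f 2 + f 3 + f 4 + f 5 + f 6 + f 7 + f 8 := by
    rw [show (Finset.univ : Finset (Fin 9)) = {0,1,2,3,4,5,6,7,8} from by decide]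
    rw [Finset.sum_insert (by decide), Finset.sum_insert (by decide),
      Finset.sum_insert (by decide), Finset.sum_insert (by decide),
      Finset.sum_insert (by decide), Finset.sum_insert (by decide),
      Finset.sum_insert (by decide), Finset.sum_insert (by decide),
      Finset.sum_singleton]
    ring
  rw [hsum]
  omega
end

section
/- With β = π/5, τ = 1/√(1+cos β), and v_k = τ·(√(cos β), cos(2kβ), sin(2kβ)) for k = 0,...,4, the projectors P_k = v_k v_kᵀ satisfy ⟨e₁, (Σ_k P_k) e₁⟩ = √5, i.e., the KCBS operator evaluated on the state (1,0,0) equals √5. -/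
open Real

/-- The KCBS measurement vectors: with β = π/5 and τ = 1/√(1+cos β),
`kcbsVec k = τ • (√(cos β), cos(2kβ), sin(2kβ))`. -/
noncomputable def kcbsVec (k : Fin 5) : Fin 3 → ℝ :=
  fun t =>
    (1 / Real.sqrt (1 + Real.cos (π / 5))) *
      ![Real.sqrt (Real.cos (π / 5)),
        Real.cos (2 * (k : ℝ) * (π / 5)),
        Real.sin (2 * (k : ℝ) * (π / 5))] t

/-- The sum of the projectors P_k = v_k v_kᵀ. -/
noncomputable def kcbsOp : Matrix (Fin 3) (Fin 3) ℝ :=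
  ∑ k : Fin 5, Matrix.of (fun i j => kcbsVec k i * kcbsVec k j)

/-- The KCBS operator evaluated on the state e₁ = (1,0,0) equals √5. -/
theorem kcbs_operator_on_e1_eq_sqrt_five :
    dotProduct ![1, 0, 0] (kcbsOp.mulVec ![1, 0, 0]) = Real.sqrt 5 := by
  have hc : Real.cos (π / 5) = (1 + √5) / 4 := Real.cos_pi_div_five
  have h5 : (0:ℝ) ≤ √5 := Real.sqrt_nonneg 5
  have hcpos : (0:ℝ) < Real.cos (π / 5) := by rw [hc]; positivity
  have h1c : (0:ℝ) < 1 + Real.cos (π / 5) := by linarith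
  have hsq : Real.sqrt (Real.cos (π / 5)) ^ 2 = Real.cos (π / 5) :=
    Real.sq_sqrt hcpos.le
  have hsq2 : Real.sqrt (1 + Real.cos (π / 5)) ^ 2 = 1 + Real.cos (π / 5) :=
    Real.sq_sqrt h1c.le
  have h5sq : √5 * √5 = 5 := Real.mul_self_sqrt (by norm_num)
  have key : dotProduct ![(1:ℝ), 0, 0] (kcbsOp.mulVec ![1, 0, 0]) =
      5 * ((1 / Real.sqrt (1 + Real.cos (π / 5))) ^ 2 *
        Real.sqrt (Real.cos (π / 5)) ^ 2) := by
    simp [kcbsOp, kcbsVec, dotProduct, Matrix.mulVec, Fin.sum_univ_succ]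
    ring
  rw [key, hsq, div_pow, one_pow, hsq2, hc]
  have h4 : (1:ℝ) + (1 + √5) / 4 = (5 + √5)/4 := by ring
  rw [h4]
  have h45 : (5:ℝ) + √5 > 0 := by positivity
  field_simp
  nlinarith [h5sq]
end
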